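/- In dimension d = 1, let m(x) = (α/2)x² for some α > 0, and let β > max{1/2, α} satisfy β = α + β/(1/2 + β). Then there exist Gaussian probability densities G on ℝ such that I₂(T̂[G] | F) / I₂(G | F) > (1/2 + β)^{-2} and H(T̂[G] | F) / H(G | F) > (1/2 + β)^{-2}, where F = γ_{0, 1/β} is the centred Gaussian quasi-equilibrium with variance 1/β. -/

import Mathlib

open MeasureTheory Filter

noncomputable section

/-- The Gaussian probability density on `ℝ` with mean `m` and variance `v`. -/
noncomputable def gauss1 (m v : ℝ) (x : ℝ) : ℝ :=
  (Real.sqrt (2 * Real.pi * v))⁻¹ * Real.exp (-(x - m) ^ 2 / (2 * v))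

lemma gauss1_pos {v : ℝ} (hv : 0 < v) (m x : ℝ) : 0 < gauss1 m v x := by
  unfold gauss1
  have : 0 < 2 * Real.pi * v := by positivity
  positivity

lemma gauss1_eq (m v : ℝ) :
    gauss1 m v = fun x => (Real.sqrt (2 * Real.pi * v))⁻¹ *
      Real.exp (-(2 * v)⁻¹ * (x - m) ^ 2) := by
  funext x
  unfold gauss1
  congr 1
  congr 1
  ring

lemma sqrt_two_pi_mul_pos {v : ℝ} (hv : 0 < v) : 0 < Real.sqrt (2 * Real.pi * v) :=
  Real.sqrt_pos.2 (by positivity)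

lemma integral_exp_center (b m : ℝ) :
    ∫ x : ℝ, Real.exp (-b * (x - m) ^ 2) = ∫ x : ℝ, Real.exp (-b * x ^ 2) :=
  integral_sub_right_eq_self (fun x => Real.exp (-b * x ^ 2)) m

lemma integral_gauss1 {v : ℝ} (hv : 0 < v) (m : ℝ) : ∫ x, gauss1 m v x = 1 := by
  rw [gauss1_eq]
  rw [integral_const_mul, integral_exp_center, integral_gaussian]
  have h1 : Real.pi / (2 * v)⁻¹ = 2 * Real.pi * v := by
    field_simp
  rw [h1]
  exact inv_mul_cancel₀ (sqrt_two_pi_mul_pos hv).ne'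

lemma integrable_gauss1 {v : ℝ} (hv : 0 < v) (m : ℝ) : Integrable (gauss1 m v) := by
  rw [gauss1_eq]
  exact (((integrable_exp_neg_mul_sq (by positivity : (0:ℝ) < (2*v)⁻¹)).comp_sub_right
    m).const_mul _)

lemma integrable_mul_gauss1 {v : ℝ} (hv : 0 < v) (m : ℝ) :
    Integrable (fun x => x * gauss1 m v x) := by
  rw [gauss1_eq]
  have hb : (0:ℝ) < (2*v)⁻¹ := by positivity
  have h : Integrable (fun x : ℝ => (x + m) * Real.exp (-(2*v)⁻¹ * x ^ 2)) := by
    have := (integrable_mul_exp_neg_mul_sq hb).add ((integrable_exp_neg_mul_sq hb).const_mul m)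
    refine this.congr ?_
    filter_upwards with x
    simp only [Pi.add_apply]
    ring
  have := h.comp_sub_right m
  simp only [sub_add_cancel] at this
  exact (this.const_mul ((Real.sqrt (2 * Real.pi * v))⁻¹)).congr
    (by filter_upwards with x; ring)

lemma integrable_sq_mul_exp {b : ℝ} (hb : 0 < b) :
    Integrable (fun x : ℝ => x ^ 2 * Real.exp (-b * x ^ 2)) := by
  have := integrable_rpow_mul_exp_neg_mul_sq hb (s := 2) (by norm_num)
  simpa [Real.rpow_natCast] using this

lemma integrable_sq_mul_gauss1 {v : ℝ} (hv : 0 < v) (m : ℝ) :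
    Integrable (fun x => x ^ 2 * gauss1 m v x) := by
  rw [gauss1_eq]
  have hb : (0:ℝ) < (2*v)⁻¹ := by positivity
  have h : Integrable (fun x : ℝ => (x + m) ^ 2 * Real.exp (-(2*v)⁻¹ * x ^ 2)) := by
    have := ((integrable_sq_mul_exp hb).add
      ((integrable_mul_exp_neg_mul_sq hb).const_mul (2*m))).add
      ((integrable_exp_neg_mul_sq hb).const_mul (m^2))
    refine this.congr ?_
    filter_upwards with x
    simp only [Pi.add_apply]
    ring
  have := h.comp_sub_right m
  simp only [sub_add_cancel] at this
  exact (this.const_mul ((Real.sqrt (2 * Real.pi * v))⁻¹)).congr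
    (by filter_upwards with x; ring)

lemma integral_mul_gauss1_zero {v : ℝ} (hv : 0 < v) :
    ∫ x, x * gauss1 0 v x = 0 := by
  have hodd : ∀ x : ℝ, (fun x => x * gauss1 0 v x) (-x) = -((fun x => x * gauss1 0 v x) x) := by
    intro x
    simp only [gauss1]
    rw [show (-x - 0) ^ 2 = (x - 0) ^ 2 by ring]
    ring
  have h := integral_neg_eq_self (fun x => x * gauss1 0 v x) volume
  simp only [hodd, integral_neg] at h
  linarith

lemma integral_sq_mul_exp {b : ℝ} (hb : 0 < b) :
    ∫ x : ℝ, x ^ 2 * Real.exp (-b * x ^ 2) = Real.sqrt (Real.pi / b) / (2 * b) := by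
  have hderiv : ∀ x : ℝ, HasDerivAt (fun y : ℝ => y * Real.exp (-b * y ^ 2))
      (Real.exp (-b * x ^ 2) - 2 * b * (x ^ 2 * Real.exp (-b * x ^ 2))) x := by
    intro x
    have h1 : HasDerivAt (fun y : ℝ => -b * y ^ 2) (-b * (2 * x ^ 1)) x :=
      (hasDerivAt_pow 2 x).const_mul (-b)
    have h2 : HasDerivAt (fun y : ℝ => Real.exp (-b * y ^ 2))
        (Real.exp (-b * x ^ 2) * (-b * (2 * x ^ 1))) x := h1.exp
    have h3 := (hasDerivAt_id x).fun_mul h2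
    refine h3.congr_deriv ?_
    simp only [id_eq, pow_one]
    ring
  have hint : Integrable (fun x : ℝ =>
      Real.exp (-b * x ^ 2) - 2 * b * (x ^ 2 * Real.exp (-b * x ^ 2))) :=
    (integrable_exp_neg_mul_sq hb).sub ((integrable_sq_mul_exp hb).const_mul (2 * b))
  have h0 := integral_eq_zero_of_hasDerivAt_of_integrable hderiv hint
    (integrable_mul_exp_neg_mul_sq hb)
  rw [integral_sub (integrable_exp_neg_mul_sq hb)
    ((integrable_sq_mul_exp hb).const_mul (2 * b)), integral_gaussian,
    integral_const_mul] at h0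
  have h2b : (2 : ℝ) * b ≠ 0 := by positivity
  field_simp at h0 ⊢
  linarith


lemma integral_sq_mul_gauss1_zero {v : ℝ} (hv : 0 < v) :
    ∫ x, x ^ 2 * gauss1 0 v x = v := by
  rw [gauss1_eq]
  have hb : (0:ℝ) < (2*v)⁻¹ := by positivity
  have h : (∫ x : ℝ, x ^ 2 * ((Real.sqrt (2 * Real.pi * v))⁻¹ *
      Real.exp (-(2 * v)⁻¹ * (x - 0) ^ 2)))
      = (Real.sqrt (2 * Real.pi * v))⁻¹ * ∫ x : ℝ, x ^ 2 * Real.exp (-(2 * v)⁻¹ * x ^ 2) := by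
    rw [← integral_const_mul]
    congr 1; funext x; rw [sub_zero]; ring
  rw [h, integral_sq_mul_exp hb]
  have h1 : Real.pi / (2 * v)⁻¹ = 2 * Real.pi * v := by field_simp
  rw [h1]
  rw [div_eq_mul_inv, ← mul_assoc]
  rw [inv_mul_cancel₀ (sqrt_two_pi_mul_pos hv).ne']
  field_simp

lemma integral_mul_gauss1 {v : ℝ} (hv : 0 < v) (m : ℝ) :
    ∫ x, x * gauss1 m v x = m := by
  have key := integral_add_right_eq_self (μ := volume) (fun x => x * gauss1 m v x) m
  have h : ∀ x : ℝ, (x + m) * gauss1 m v (x + m) = x * gauss1 0 v x + m * gauss1 0 v x := by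
    intro x
    have : gauss1 m v (x + m) = gauss1 0 v x := by
      unfold gauss1; rw [show x + m - m = x - 0 by ring]
    rw [this]; ring
  rw [← key]
  simp only [h]
  rw [integral_add (integrable_mul_gauss1 hv 0) ((integrable_gauss1 hv 0).const_mul m),
    integral_mul_gauss1_zero hv, integral_const_mul, integral_gauss1 hv, zero_add, mul_one]

lemma integral_sq_mul_gauss1 {v : ℝ} (hv : 0 < v) (m : ℝ) :
    ∫ x, x ^ 2 * gauss1 m v x = v + m ^ 2 := by
  have key := integral_add_right_eq_self (μ := volume) (fun x => x ^ 2 * gauss1 m v x) m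
  have h : ∀ x : ℝ, (x + m) ^ 2 * gauss1 m v (x + m)
      = x ^ 2 * gauss1 0 v x + 2 * m * (x * gauss1 0 v x) + m ^ 2 * gauss1 0 v x := by
    intro x
    have : gauss1 m v (x + m) = gauss1 0 v x := by
      unfold gauss1; rw [show x + m - m = x - 0 by ring]
    rw [this]; ring
  rw [← key]
  simp only [h]
  have h1 : Integrable (fun x : ℝ => x ^ 2 * gauss1 0 v x + 2 * m * (x * gauss1 0 v x)) :=
    (integrable_sq_mul_gauss1 hv 0).add ((integrable_mul_gauss1 hv 0).const_mul (2*m))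
  have h2 : Integrable (fun x : ℝ => m ^ 2 * gauss1 0 v x) :=
    (integrable_gauss1 hv 0).const_mul (m^2)
  rw [integral_add h1 h2,
    integral_add (integrable_sq_mul_gauss1 hv 0) ((integrable_mul_gauss1 hv 0).const_mul (2*m)),
    integral_sq_mul_gauss1_zero hv, integral_const_mul, integral_const_mul,
    integral_mul_gauss1_zero hv, integral_gauss1 hv]
  ring

/-- Product of two Gaussian densities at the same point. -/
lemma gauss1_mul_gauss1 {s u : ℝ} (hs : 0 < s) (hu : 0 < u) (a b t : ℝ) :
    gauss1 a s t * gauss1 b u t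
      = gauss1 b (s + u) a * gauss1 ((a * u + b * s) / (s + u)) (s * u / (s + u)) t := by
  have hsu : 0 < s + u := by linarith
  have hw : 0 < s * u / (s + u) := by positivity
  unfold gauss1
  have hpref : (Real.sqrt (2 * Real.pi * s))⁻¹ * (Real.sqrt (2 * Real.pi * u))⁻¹
      = (Real.sqrt (2 * Real.pi * (s + u)))⁻¹ *
        (Real.sqrt (2 * Real.pi * (s * u / (s + u))))⁻¹ := by
    rw [← mul_inv, ← mul_inv, ← Real.sqrt_mul (by positivity), ← Real.sqrt_mul (by positivity)]
    congr 2
    field_simp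
  have hexp : -(t - a) ^ 2 / (2 * s) + -(t - b) ^ 2 / (2 * u)
      = -(a - b) ^ 2 / (2 * (s + u)) + -(t - (a * u + b * s) / (s + u)) ^ 2
          / (2 * (s * u / (s + u))) := by
    field_simp
    ring
  calc (Real.sqrt (2 * Real.pi * s))⁻¹ * Real.exp (-(t - a) ^ 2 / (2 * s)) *
      ((Real.sqrt (2 * Real.pi * u))⁻¹ * Real.exp (-(t - b) ^ 2 / (2 * u)))
      = ((Real.sqrt (2 * Real.pi * s))⁻¹ * (Real.sqrt (2 * Real.pi * u))⁻¹) *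
        Real.exp (-(t - a) ^ 2 / (2 * s) + -(t - b) ^ 2 / (2 * u)) := by
        rw [Real.exp_add]; ring
    _ = _ := by
        rw [hpref, hexp, Real.exp_add]; ring

lemma integral_gauss1_mul_gauss1 {s u : ℝ} (hs : 0 < s) (hu : 0 < u) (a b : ℝ) :
    ∫ t, gauss1 a s t * gauss1 b u t = gauss1 b (s + u) a := by
  have hw : 0 < s * u / (s + u) := by positivity
  simp only [gauss1_mul_gauss1 hs hu a b]
  rw [integral_const_mul, integral_gauss1 hw, mul_one]

lemma integrable_gauss1_mul_gauss1 {s u : ℝ} (hs : 0 < s) (hu : 0 < u) (a b : ℝ) :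
    Integrable (fun t => gauss1 a s t * gauss1 b u t) := by
  have hw : 0 < s * u / (s + u) := by positivity
  have : (fun t => gauss1 a s t * gauss1 b u t) = fun t =>
      gauss1 b (s + u) a * gauss1 ((a * u + b * s) / (s + u)) (s * u / (s + u)) t := by
    funext t; exact gauss1_mul_gauss1 hs hu a b t
  rw [this]
  exact (integrable_gauss1 hw _).const_mul _

/-- Fisher's infinitesimal reproduction operator `R` on `ℝ`. -/
noncomputable def reprod1 (F : ℝ → ℝ) (x : ℝ) : ℝ :=
  (∫ p : ℝ × ℝ, gauss1 0 1 (x - (p.1 + p.2) / 2) * F p.1 * F p.2) / (∫ y, |F y|)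

/-- The one-dimensional Fisher infinitesimal model operator `T = S ∘ R`. -/
noncomputable def fisherT1 (m : ℝ → ℝ) (F : ℝ → ℝ) : ℝ → ℝ :=
  fun x => Real.exp (-(m x)) * reprod1 F x

/-- The renormalised Fisher operator `T̂[F] = T[F]/‖T[F]‖_{L¹}`. -/
noncomputable def fisherHat1 (m : ℝ → ℝ) (F : ℝ → ℝ) : ℝ → ℝ :=
  fun x => fisherT1 m F x / (∫ y, |fisherT1 m F y|)

/-- The relative entropy `H(ν | μ) = ∫ ν log(ν/μ)` of densities on `ℝ`. -/
noncomputable def relEnt1 (ν μ : ℝ → ℝ) : ℝ :=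
  ∫ x, ν x * Real.log (ν x / μ x)

/-- The `L²` relative Fisher information `I₂(ν | μ) = ∫ |(log(ν/μ))'|² dν` on `ℝ`. -/
noncomputable def relFisher2 (ν μ : ℝ → ℝ) : ℝ :=
  ∫ x, (deriv (fun y => Real.log (ν y / μ y)) x) ^ 2 * ν x

lemma continuous_gauss1 (m v : ℝ) : Continuous (gauss1 m v) := by
  unfold gauss1
  fun_prop

lemma gauss1_le {v : ℝ} (hv : 0 < v) (m x : ℝ) :
    gauss1 m v x ≤ (Real.sqrt (2 * Real.pi * v))⁻¹ := by
  unfold gauss1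
  have h1 : Real.exp (-(x - m) ^ 2 / (2 * v)) ≤ 1 := by
    rw [Real.exp_le_one_iff, neg_div]
    have : 0 ≤ (x - m) ^ 2 / (2 * v) := by positivity
    linarith
  calc (Real.sqrt (2 * Real.pi * v))⁻¹ * Real.exp (-(x - m) ^ 2 / (2 * v))
      ≤ (Real.sqrt (2 * Real.pi * v))⁻¹ * 1 :=
        mul_le_mul_of_nonneg_left h1 (by positivity)
    _ = _ := mul_one _

lemma kernel_eq (c t : ℝ) : gauss1 0 1 (c - t / 2) = 2 * gauss1 (2 * c) 4 t := by
  unfold gauss1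
  have h1 : Real.sqrt (2 * Real.pi * 4) = 2 * Real.sqrt (2 * Real.pi * 1) := by
    rw [show (2 * Real.pi * 4 : ℝ) = 2 ^ 2 * (2 * Real.pi * 1) by ring,
      Real.sqrt_mul (by positivity), Real.sqrt_sq (by norm_num)]
  have h2 : -(c - t / 2 - 0) ^ 2 / (2 * 1) = -(t - 2 * c) ^ 2 / (2 * 4) := by ring
  rw [h1, h2, mul_inv]
  ring

lemma gauss1_flip (m w c t : ℝ) : gauss1 m w (c - t) = gauss1 (c - m) w t := by
  unfold gauss1
  rw [show c - t - m = -(t - (c - m)) by ring, neg_sq]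

lemma reprod1_gauss1 {v : ℝ} (hv : 0 < v) (μ : ℝ) :
    reprod1 (gauss1 μ v) = gauss1 μ (1 + v / 2) := by
  have h4v : (0:ℝ) < 4 + v := by linarith
  have h42v : (0:ℝ) < 1 + v / 2 := by linarith
  funext x
  unfold reprod1
  have hden : ∫ y, |gauss1 μ v y| = 1 := by
    rw [← integral_gauss1 hv μ]
    congr 1; funext y; exact abs_of_pos (gauss1_pos hv μ y)
  rw [hden, div_one]
  have hInt : Integrable
      (fun p : ℝ × ℝ => gauss1 0 1 (x - (p.1 + p.2) / 2) * gauss1 μ v p.1 * gauss1 μ v p.2)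
      (volume.prod volume) := by
    have hbd : Integrable
        (fun p : ℝ × ℝ => (Real.sqrt (2 * Real.pi * 1))⁻¹ * (gauss1 μ v p.1 * gauss1 μ v p.2))
        (volume.prod volume) :=
      ((integrable_gauss1 hv μ).mul_prod (integrable_gauss1 hv μ)).const_mul _
    refine hbd.mono' ?_ ?_
    · apply Continuous.aestronglyMeasurable
      have : Continuous (fun p : ℝ × ℝ => x - (p.1 + p.2) / 2) := by fun_prop
      exact (((continuous_gauss1 0 1).comp this).mul
        ((continuous_gauss1 μ v).comp continuous_fst)).mul
        ((continuous_gauss1 μ v).comp continuous_snd)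
    · filter_upwards with p
      have h1 : 0 < gauss1 μ v p.1 := gauss1_pos hv μ p.1
      have h2 : 0 < gauss1 μ v p.2 := gauss1_pos hv μ p.2
      have h0 : 0 < gauss1 0 1 (x - (p.1 + p.2) / 2) := gauss1_pos one_pos 0 _
      rw [Real.norm_eq_abs, abs_of_pos (by positivity)]
      calc gauss1 0 1 (x - (p.1 + p.2) / 2) * gauss1 μ v p.1 * gauss1 μ v p.2
          ≤ (Real.sqrt (2 * Real.pi * 1))⁻¹ * gauss1 μ v p.1 * gauss1 μ v p.2 := by
            apply mul_le_mul_of_nonneg_right _ h2.le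
            exact mul_le_mul_of_nonneg_right (gauss1_le one_pos 0 _) h1.le
        _ = (Real.sqrt (2 * Real.pi * 1))⁻¹ * (gauss1 μ v p.1 * gauss1 μ v p.2) := by ring
  rw [MeasureTheory.Measure.volume_eq_prod, integral_prod _ hInt]
  have inner : ∀ p₁ : ℝ,
      (∫ p₂, gauss1 0 1 (x - (p₁ + p₂) / 2) * gauss1 μ v p₁ * gauss1 μ v p₂)
        = gauss1 μ v p₁ * (2 * gauss1 (2 * x - μ) (4 + v) p₁) := by
    intro p₁
    have hker : ∀ p₂ : ℝ, gauss1 0 1 (x - (p₁ + p₂) / 2)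
        = 2 * gauss1 (2 * (x - p₁ / 2)) 4 p₂ := by
      intro p₂
      rw [← kernel_eq (x - p₁ / 2) p₂]
      congr 1; ring
    have : (fun p₂ => gauss1 0 1 (x - (p₁ + p₂) / 2) * gauss1 μ v p₁ * gauss1 μ v p₂)
        = fun p₂ => (gauss1 μ v p₁ * 2) *
            (gauss1 (2 * (x - p₁ / 2)) 4 p₂ * gauss1 μ v p₂) := by
      funext p₂; rw [hker p₂]; ring
    rw [this, integral_const_mul, integral_gauss1_mul_gauss1 (by norm_num) hv]
    have : gauss1 μ (4 + v) (2 * (x - p₁ / 2)) = gauss1 (2 * x - μ) (4 + v) p₁ := by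
      rw [show 2 * (x - p₁ / 2) = 2 * x - p₁ by ring, gauss1_flip]
    rw [this]; ring
  simp only [inner]
  have : (fun p₁ => gauss1 μ v p₁ * (2 * gauss1 (2 * x - μ) (4 + v) p₁))
      = fun p₁ => 2 * (gauss1 (2 * x - μ) (4 + v) p₁ * gauss1 μ v p₁) := by
    funext p₁; ring
  rw [this, integral_const_mul, integral_gauss1_mul_gauss1 h4v hv]
  -- `2 * gauss1 μ (4 + v + v) (2 * x - μ) = gauss1 μ (1 + v / 2) x`
  unfold gauss1
  have h1 : Real.sqrt (2 * Real.pi * (4 + v + v)) = 2 * Real.sqrt (2 * Real.pi * (1 + v / 2)) := by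
    rw [show (2 * Real.pi * (4 + v + v) : ℝ) = 2 ^ 2 * (2 * Real.pi * (1 + v / 2)) by ring,
      Real.sqrt_mul (by positivity), Real.sqrt_sq (by norm_num)]
  have h2 : -(2 * x - μ - μ) ^ 2 / (2 * (4 + v + v)) = -(x - μ) ^ 2 / (2 * (1 + v / 2)) := by
    rw [div_eq_div_iff (by positivity) (by positivity)]
    ring
  rw [h1, h2, mul_inv]
  ring

lemma sel_mul_gauss1 {α w : ℝ} (hα : 0 < α) (hw : 0 < w) (μ x : ℝ) :
    Real.exp (-(α / 2 * x ^ 2)) * gauss1 μ w x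
      = (Real.sqrt ((w / (1 + α * w)) / w) *
          Real.exp ((μ / (1 + α * w)) ^ 2 / (2 * (w / (1 + α * w))) - μ ^ 2 / (2 * w))) *
        gauss1 (μ / (1 + α * w)) (w / (1 + α * w)) x := by
  have h1aw : (0:ℝ) < 1 + α * w := by positivity
  set v' := w / (1 + α * w) with hv'def
  have hv' : 0 < v' := by positivity
  set μ' := μ / (1 + α * w) with hμ'def
  set K := μ' ^ 2 / (2 * v') - μ ^ 2 / (2 * w) with hKdef
  unfold gauss1
  have hpref : (Real.sqrt (2 * Real.pi * w))⁻¹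
      = Real.sqrt (v' / w) * (Real.sqrt (2 * Real.pi * v'))⁻¹ := by
    rw [← Real.sqrt_inv, ← Real.sqrt_inv, ← Real.sqrt_mul (by positivity)]
    congr 1
    rw [hv'def]
    field_simp
    all_goals ring
  have hexp : -(α / 2 * x ^ 2) + -(x - μ) ^ 2 / (2 * w)
      = K + -(x - μ') ^ 2 / (2 * v') := by
    rw [hKdef, hμ'def, hv'def]
    field_simp
    all_goals ring
  calc Real.exp (-(α / 2 * x ^ 2)) * ((Real.sqrt (2 * Real.pi * w))⁻¹ *
        Real.exp (-(x - μ) ^ 2 / (2 * w)))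
      = (Real.sqrt (2 * Real.pi * w))⁻¹ *
          Real.exp (-(α / 2 * x ^ 2) + -(x - μ) ^ 2 / (2 * w)) := by
        rw [Real.exp_add]; ring
    _ = Real.sqrt (v' / w) * (Real.sqrt (2 * Real.pi * v'))⁻¹ *
          (Real.exp K * Real.exp (-(x - μ') ^ 2 / (2 * v'))) := by
        rw [hpref, hexp, Real.exp_add]
    _ = _ := by ring

lemma fisherT1_gauss1 {α v : ℝ} (hα : 0 < α) (hv : 0 < v) (μ : ℝ) :
    fisherT1 (fun x => α / 2 * x ^ 2) (gauss1 μ v)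
      = fun x => (Real.sqrt (((1 + v / 2) / (1 + α * (1 + v / 2))) / (1 + v / 2)) *
          Real.exp ((μ / (1 + α * (1 + v / 2))) ^ 2 /
              (2 * ((1 + v / 2) / (1 + α * (1 + v / 2))))
            - μ ^ 2 / (2 * (1 + v / 2)))) *
        gauss1 (μ / (1 + α * (1 + v / 2))) ((1 + v / 2) / (1 + α * (1 + v / 2))) x := by
  funext x
  unfold fisherT1
  rw [reprod1_gauss1 hv μ]
  exact sel_mul_gauss1 hα (by linarith) μ x

lemma fisherHat1_gauss1 {α v : ℝ} (hα : 0 < α) (hv : 0 < v) (μ : ℝ) :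
    fisherHat1 (fun x => α / 2 * x ^ 2) (gauss1 μ v)
      = gauss1 (μ / (1 + α * (1 + v / 2))) ((1 + v / 2) / (1 + α * (1 + v / 2))) := by
  have hw : (0:ℝ) < 1 + v / 2 := by linarith
  have h1aw : (0:ℝ) < 1 + α * (1 + v / 2) := by positivity
  have hv' : (0:ℝ) < (1 + v / 2) / (1 + α * (1 + v / 2)) := by positivity
  set c := Real.sqrt (((1 + v / 2) / (1 + α * (1 + v / 2))) / (1 + v / 2)) *
      Real.exp ((μ / (1 + α * (1 + v / 2))) ^ 2 /
          (2 * ((1 + v / 2) / (1 + α * (1 + v / 2))))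
        - μ ^ 2 / (2 * (1 + v / 2))) with hcdef
  have hc : 0 < c := by
    rw [hcdef]; positivity
  funext x
  unfold fisherHat1
  rw [fisherT1_gauss1 hα hv μ]
  have hden : (∫ y, |c * gauss1 (μ / (1 + α * (1 + v / 2)))
      ((1 + v / 2) / (1 + α * (1 + v / 2))) y|) = c := by
    have : (fun y => |c * gauss1 (μ / (1 + α * (1 + v / 2)))
        ((1 + v / 2) / (1 + α * (1 + v / 2))) y|)
        = fun y => c * gauss1 (μ / (1 + α * (1 + v / 2)))
            ((1 + v / 2) / (1 + α * (1 + v / 2))) y := by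
      funext y
      exact abs_of_pos (mul_pos hc (gauss1_pos hv' _ y))
    rw [this, integral_const_mul, integral_gauss1 hv', mul_one]
  rw [hden, ← hcdef]
  show c * gauss1 (μ / (1 + α * (1 + v / 2))) ((1 + v / 2) / (1 + α * (1 + v / 2))) x / c
    = gauss1 (μ / (1 + α * (1 + v / 2))) ((1 + v / 2) / (1 + α * (1 + v / 2))) x
  rw [mul_comm, mul_div_assoc, div_self hc.ne', mul_one]

lemma logratio_eq {v w : ℝ} (hv : 0 < v) (hw : 0 < w) (m : ℝ) :
    (fun y => Real.log (gauss1 m v y / gauss1 0 w y))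
      = fun y => Real.log (w / v) / 2 + (y ^ 2 / (2 * w) - (y - m) ^ 2 / (2 * v)) := by
  funext y
  have hgv := gauss1_pos hv m y
  have hgw := gauss1_pos hw 0 y
  rw [Real.log_div hgv.ne' hgw.ne']
  unfold gauss1
  rw [Real.log_mul (by positivity) (Real.exp_ne_zero _),
    Real.log_mul (by positivity) (Real.exp_ne_zero _),
    Real.log_exp, Real.log_exp, Real.log_inv, Real.log_inv,
    Real.log_sqrt (by positivity), Real.log_sqrt (by positivity)]
  have h2 : Real.log (2 * Real.pi * w) = Real.log (2 * Real.pi) + Real.log w :=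
    Real.log_mul (by positivity) hw.ne'
  have h3 : Real.log (2 * Real.pi * v) = Real.log (2 * Real.pi) + Real.log v :=
    Real.log_mul (by positivity) hv.ne'
  have h4 : Real.log (w / v) = Real.log w - Real.log v := Real.log_div hw.ne' hv.ne'
  rw [h2, h3, h4]
  ring

lemma deriv_logratio {v w : ℝ} (hv : 0 < v) (hw : 0 < w) (m x : ℝ) :
    deriv (fun y => Real.log (gauss1 m v y / gauss1 0 w y)) x
      = (1 / w - 1 / v) * x + m / v := by
  rw [logratio_eq hv hw m]
  have hy2 : HasDerivAt (fun y : ℝ => y ^ 2) (2 * x) x := by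
    simpa using hasDerivAt_pow 2 x
  have hm : HasDerivAt (fun y : ℝ => (y - m) ^ 2) (2 * (x - m)) x := by
    have := ((hasDerivAt_id x).sub_const m).fun_pow 2
    simpa using this
  have h := ((hy2.div_const (2 * w)).fun_sub (hm.div_const (2 * v))).const_add
    (Real.log (w / v) / 2)
  rw [h.deriv]
  field_simp
  ring

lemma relFisher2_gauss1 {v w : ℝ} (hv : 0 < v) (hw : 0 < w) (m : ℝ) :
    relFisher2 (gauss1 m v) (gauss1 0 w) = (1 / w - 1 / v) ^ 2 * v + m ^ 2 / w ^ 2 := by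
  unfold relFisher2
  simp_rw [deriv_logratio hv hw m]
  have hsplit : (fun x => ((1 / w - 1 / v) * x + m / v) ^ 2 * gauss1 m v x)
      = fun x => ((1 / w - 1 / v) ^ 2 * (x ^ 2 * gauss1 m v x)
          + 2 * (1 / w - 1 / v) * (m / v) * (x * gauss1 m v x))
          + (m / v) ^ 2 * gauss1 m v x := by
    funext x; ring
  rw [hsplit]
  have h1 : Integrable (fun x : ℝ => (1 / w - 1 / v) ^ 2 * (x ^ 2 * gauss1 m v x)
      + 2 * (1 / w - 1 / v) * (m / v) * (x * gauss1 m v x)) :=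
    ((integrable_sq_mul_gauss1 hv m).const_mul _).add
      ((integrable_mul_gauss1 hv m).const_mul _)
  have h2 : Integrable (fun x : ℝ => (m / v) ^ 2 * gauss1 m v x) :=
    (integrable_gauss1 hv m).const_mul _
  rw [integral_add h1 h2,
    integral_add ((integrable_sq_mul_gauss1 hv m).const_mul _)
      ((integrable_mul_gauss1 hv m).const_mul _),
    integral_const_mul, integral_const_mul, integral_const_mul,
    integral_sq_mul_gauss1 hv m, integral_mul_gauss1 hv m, integral_gauss1 hv m]
  field_simp
  ring

lemma relEnt1_gauss1 {v w : ℝ} (hv : 0 < v) (hw : 0 < w) (m : ℝ) :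
    relEnt1 (gauss1 m v) (gauss1 0 w)
      = Real.log (w / v) / 2 + (v + m ^ 2) / (2 * w) - 1 / 2 := by
  unfold relEnt1
  have hrw : (fun x => gauss1 m v x * Real.log (gauss1 m v x / gauss1 0 w x))
      = fun x => ((1 / (2 * w) - 1 / (2 * v)) * (x ^ 2 * gauss1 m v x)
          + (m / v) * (x * gauss1 m v x))
          + (Real.log (w / v) / 2 - m ^ 2 / (2 * v)) * gauss1 m v x := by
    funext x
    rw [congrFun (logratio_eq hv hw m) x]
    field_simp
    ring
  rw [hrw]
  have h1 : Integrable (fun x : ℝ => (1 / (2 * w) - 1 / (2 * v)) * (x ^ 2 * gauss1 m v x)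
      + (m / v) * (x * gauss1 m v x)) :=
    ((integrable_sq_mul_gauss1 hv m).const_mul _).add
      ((integrable_mul_gauss1 hv m).const_mul _)
  have h2 : Integrable (fun x : ℝ => (Real.log (w / v) / 2 - m ^ 2 / (2 * v)) * gauss1 m v x) :=
    (integrable_gauss1 hv m).const_mul _
  rw [integral_add h1 h2,
    integral_add ((integrable_sq_mul_gauss1 hv m).const_mul _)
      ((integrable_mul_gauss1 hv m).const_mul _),
    integral_const_mul, integral_const_mul, integral_const_mul,
    integral_sq_mul_gauss1 hv m, integral_mul_gauss1 hv m, integral_gauss1 hv m]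
  field_simp
  ring

set_option maxHeartbeats 2000000 in
/-- For quadratic selection `m(x) = (α/2)x²` in dimension 1, neither
the `L²` relative Fisher information nor the relative entropy contracts under the
renormalised Fisher operator `T̂` at the rate `(1/2 + β)^{-2}`: there are Gaussian
densities `G` for which both ratios exceed `(1/2 + β)^{-2}` (here `F = γ_{0,1/β}` is the
Gaussian quasi-equilibrium). -/
theorem fisher_no_contraction_other_metrics (α β : ℝ) (hα : 0 < α)
    (hβ : max (1 / 2) α < β) (hβeq : β = α + β / (1 / 2 + β)) :
    ∃ μ₀ σ : ℝ, 0 < σ ∧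
      ((1 / 2 + β)⁻¹) ^ 2 <
        relFisher2 (fisherHat1 (fun x => α / 2 * x ^ 2) (gauss1 μ₀ (σ ^ 2)))
            (gauss1 0 (1 / β)) /
          relFisher2 (gauss1 μ₀ (σ ^ 2)) (gauss1 0 (1 / β)) ∧
      ((1 / 2 + β)⁻¹) ^ 2 <
        relEnt1 (fisherHat1 (fun x => α / 2 * x ^ 2) (gauss1 μ₀ (σ ^ 2)))
            (gauss1 0 (1 / β)) /
          relEnt1 (gauss1 μ₀ (σ ^ 2)) (gauss1 0 (1 / β)) := by
  have hβhalf : (1:ℝ)/2 < β := lt_of_le_of_lt (le_max_left _ _) hβ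
  have hβpos : 0 < β := by linarith
  have hlog2 : (1:ℝ)/2 < Real.log 2 := by
    have := Real.log_two_gt_d9
    linarith
  -- algebraic consequence of the fixed-point equation
  have hkey : α + 2*α*β = 2*β^2 - β := by
    have h12β : (1/2 + β : ℝ) ≠ 0 := by positivity
    field_simp at hβeq
    linarith
  set v : ℝ := 1/(2*β) with hvdef
  have hv : 0 < v := by rw [hvdef]; positivity
  have hw : (0:ℝ) < 1/β := by positivity
  -- the contraction factor of the mean exceeds `(1/2+β)⁻¹`
  have hDpos : (0:ℝ) < 1 + α * (1 + v/2) := by positivity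
  have hDlt : 1 + α * (1 + v/2) < 1/2 + β := by
    have h3 : α + α/(2*β) = β - 1/2 := by
      field_simp
      linarith [hkey]
    have h4 : α/(4*β) < α/(2*β) :=
      div_lt_div_of_pos_left hα (by linarith) (by linarith)
    have h5 : α * (1 + v/2) = α + α/(4*β) := by
      rw [hvdef]; field_simp; ring
    linarith
  have hv' : (0:ℝ) < (1 + v/2) / (1 + α * (1 + v/2)) := by positivity
  set r : ℝ := ((1/2 + β)⁻¹)^2 with hrdef
  have hrpos : 0 < r := by rw [hrdef]; positivity
  have hrlt : r < 1/(1 + α * (1 + v/2))^2 := by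
    have hinv : (1/2 + β)⁻¹ < (1 + α * (1 + v/2))⁻¹ := by
      rw [inv_lt_inv₀ (by positivity) hDpos]
      exact hDlt
    have h2 := pow_lt_pow_left₀ hinv (by positivity) (two_ne_zero)
    rw [hrdef]
    calc ((1/2 + β)⁻¹)^2 < ((1 + α * (1 + v/2))⁻¹)^2 := h2
      _ = 1/(1 + α * (1 + v/2))^2 := by rw [inv_pow, one_div]
  set ε : ℝ := 1/(1 + α * (1 + v/2))^2 - r with hεdef
  have hεpos : 0 < ε := by rw [hεdef]; linarith
  have h1D : 1/(1 + α * (1 + v/2))^2 = r + ε := by rw [hεdef]; ring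
  have hc2 : (0:ℝ) ≤ r*(Real.log 2 - 1/2)/(β*ε) := by
    apply div_nonneg _ (by positivity)
    apply mul_nonneg hrpos.le
    linarith
  have hc1 : (0:ℝ) ≤ r/(2*β*ε) := by positivity
  set μ₀ : ℝ := Real.sqrt (r/(2*β*ε) + r*(Real.log 2 - 1/2)/(β*ε) + 1) with hμdef
  have hμsq : μ₀^2 = r/(2*β*ε) + r*(Real.log 2 - 1/2)/(β*ε) + 1 := by
    rw [hμdef, Real.sq_sqrt (by linarith)]
  clear_value v r ε μ₀
  refine ⟨μ₀, Real.sqrt v, Real.sqrt_pos.2 hv, ?_⟩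
  rw [Real.sq_sqrt hv.le]
  rw [fisherHat1_gauss1 hα hv μ₀,
    relFisher2_gauss1 hv' hw, relFisher2_gauss1 hv hw,
    relEnt1_gauss1 hv' hw, relEnt1_gauss1 hv hw]
  have hDF_eq : (1/(1/β) - 1/v)^2 * v + μ₀^2/(1/β)^2 = β/2 + β^2*μ₀^2 := by
    rw [hvdef]; field_simp; ring
  have hμ'sq : (μ₀ / (1 + α * (1 + v/2)))^2 / (1/β)^2
      = β^2*μ₀^2 * (1/(1 + α * (1 + v/2))^2) := by
    field_simp
  constructor
  · -- Fisher information ratio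
    have hDF_pos : (0:ℝ) < (1/(1/β) - 1/v)^2 * v + μ₀^2/(1/β)^2 := by
      rw [hDF_eq]; positivity
    rw [lt_div_iff₀ hDF_pos, hDF_eq]
    have hNlb : β^2*μ₀^2 * (1/(1 + α * (1 + v/2))^2)
        ≤ (1/(1/β) - 1/((1 + v/2) / (1 + α * (1 + v/2))))^2 *
            ((1 + v/2) / (1 + α * (1 + v/2)))
          + (μ₀ / (1 + α * (1 + v/2)))^2 / (1/β)^2 := by
      rw [← hμ'sq]
      exact le_add_of_nonneg_left (by positivity)
    have hcancelF : ε*β^2*μ₀^2 = r*β/2 + ε*β^2*(r*(Real.log 2 - 1/2)/(β*ε)) + ε*β^2 := by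
      rw [hμsq]
      field_simp
    have h3 : 0 ≤ ε*β^2*(r*(Real.log 2 - 1/2)/(β*ε)) :=
      mul_nonneg (mul_nonneg hεpos.le (sq_nonneg β)) hc2
    have h4 : 0 < ε*β^2 := mul_pos hεpos (pow_pos hβpos 2)
    have hmid : r * (β/2 + β^2*μ₀^2) < β^2*μ₀^2 * (1/(1 + α * (1 + v/2))^2) := by
      rw [h1D]
      linarith [hcancelF, h3, h4]
    exact hmid.trans_le hNlb
  · -- relative entropy ratio
    have hDH_eq : Real.log ((1/β)/v)/2 + (v + μ₀^2)/(2*(1/β)) - 1/2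
        = Real.log 2/2 - 1/4 + β*μ₀^2/2 := by
      have hv2 : (1/β)/v = 2 := by
        rw [hvdef]
        field_simp
      rw [hv2, hvdef]
      field_simp
      ring
    have hDH_pos : (0:ℝ) < Real.log ((1/β)/v)/2 + (v + μ₀^2)/(2*(1/β)) - 1/2 := by
      rw [hDH_eq]
      linarith [mul_nonneg hβpos.le (sq_nonneg μ₀), hlog2]
    rw [lt_div_iff₀ hDH_pos, hDH_eq]
    have hsplit : ((1 + v/2) / (1 + α * (1 + v/2)) + (μ₀ / (1 + α * (1 + v/2)))^2)/(2*(1/β))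
        = β*((1 + v/2) / (1 + α * (1 + v/2)))/2 + β*(μ₀ / (1 + α * (1 + v/2)))^2/2 := by
      field_simp
    have hlogflip : Real.log ((1/β)/((1 + v/2) / (1 + α * (1 + v/2))))
        = - Real.log (β*((1 + v/2) / (1 + α * (1 + v/2)))) := by
      rw [show (1/β)/((1 + v/2) / (1 + α * (1 + v/2)))
          = (β*((1 + v/2) / (1 + α * (1 + v/2))))⁻¹ by field_simp, Real.log_inv]
    have hlogle : Real.log (β*((1 + v/2) / (1 + α * (1 + v/2))))
        ≤ β*((1 + v/2) / (1 + α * (1 + v/2))) - 1 :=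
      Real.log_le_sub_one_of_pos (by positivity)
    have hNHlb : β*(μ₀ / (1 + α * (1 + v/2)))^2/2
        ≤ Real.log ((1/β)/((1 + v/2) / (1 + α * (1 + v/2))))/2
          + ((1 + v/2) / (1 + α * (1 + v/2)) + (μ₀ / (1 + α * (1 + v/2)))^2)/(2*(1/β))
          - 1/2 := by
      rw [hlogflip, hsplit]
      linarith [hlogle]
    have hμ'2 : β*(μ₀ / (1 + α * (1 + v/2)))^2/2
        = β*μ₀^2*(1/(1 + α * (1 + v/2))^2)/2 := by
      field_simp
    have hcancelH : ε*β*μ₀^2 = ε*β*(r/(2*β*ε)) + r*(Real.log 2 - 1/2) + ε*β := by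
      rw [hμsq]
      field_simp
    have h5 : 0 ≤ ε*β*(r/(2*β*ε)) := mul_nonneg (mul_nonneg hεpos.le hβpos.le) hc1
    have h6 : 0 < ε*β := mul_pos hεpos hβpos
    have hmid : r * (Real.log 2/2 - 1/4 + β*μ₀^2/2)
        < β*(μ₀ / (1 + α * (1 + v/2)))^2/2 := by
      rw [hμ'2, h1D]
      linarith [hcancelH, h5, h6]
    exact hmid.trans_le hNHlb
end
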